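/- Let Π⁺ and Û⁺ be measures on (0,∞) and [0,∞) respectively, related on (0,∞) by Π⁺(dx) = ∫_0^∞ Π(y + dx) Û⁺(dy) for a measure Π on (0,∞), where Π(y+dx) denotes the translate as above. Suppose there exist 0 ≤ a < b ≤ ∞ such that Lebesgue measure restricted to (a,b) is absolutely continuous with respect to Π restricted to (a,b), and Û⁺([0,ε)) > 0 for every ε > 0. Then Lebesgue measure restricted to (a,b) is absolutely continuous with respect to Π⁺ restricted to (a,b). -/

import Mathlib

open MeasureTheory Set
open scoped ENNReal

/-- If `μ ≪ π`, then `μ ≪ μ ⊓ π`. -/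
lemma absolutelyContinuous_inf {α : Type*} [MeasurableSpace α] {μ π : Measure α}
    (h : μ ≪ π) : μ ≪ μ ⊓ π := by
  refine Measure.AbsolutelyContinuous.mk fun E hE hE0 => ?_
  rw [Measure.inf_apply hE] at hE0
  have ht : ∀ n : ℕ, ∃ t : Set α, μ (t ∩ E) + π (tᶜ ∩ E) < 2⁻¹ ^ n := by
    intro n
    have hpos : (0 : ℝ≥0∞) < 2⁻¹ ^ n := ENNReal.pow_pos (by norm_num) n
    have : sInf {m | ∃ t, m = μ (t ∩ E) + π (tᶜ ∩ E)} < 2⁻¹ ^ n := by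
      rw [hE0]; exact hpos
    obtain ⟨m, ⟨t, rfl⟩, hm⟩ := sInf_lt_iff.mp this
    exact ⟨t, hm⟩
  choose t hts using ht
  set A : Set α := ⋂ n, ⋃ m, (t (n + m) ∩ E) with hAdef
  have htmu : ∀ n, μ (t n ∩ E) ≤ 2⁻¹ ^ n := fun n =>
    le_of_lt (lt_of_le_of_lt (le_add_right le_rfl) (hts n))
  have htpi : ∀ n, π ((t n)ᶜ ∩ E) ≤ 2⁻¹ ^ n := fun n =>
    le_of_lt (lt_of_le_of_lt (le_add_left le_rfl) (hts n))
  have hgeo : ∑' m : ℕ, (2⁻¹ : ℝ≥0∞) ^ m = 2 := by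
    rw [ENNReal.tsum_geometric, ENNReal.one_sub_inv_two, inv_inv]
  have hA : μ A = 0 := by
    have hAle : ∀ n : ℕ, μ A ≤ 2⁻¹ ^ n * 2 := by
      intro n
      calc μ A ≤ μ (⋃ m, (t (n + m) ∩ E)) := measure_mono (iInter_subset _ n)
        _ ≤ ∑' m, μ (t (n + m) ∩ E) := measure_iUnion_le _
        _ ≤ ∑' m, (2⁻¹ : ℝ≥0∞) ^ (n + m) := ENNReal.tsum_le_tsum fun m => htmu (n + m)
        _ = 2⁻¹ ^ n * 2 := by
            simp_rw [pow_add]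
            rw [ENNReal.tsum_mul_left, hgeo]
    have htend : Filter.Tendsto (fun n : ℕ => (2⁻¹ : ℝ≥0∞) ^ n * 2) Filter.atTop (nhds 0) := by
      have h1 : Filter.Tendsto (fun n : ℕ => (2⁻¹ : ℝ≥0∞) ^ n) Filter.atTop (nhds 0) :=
        ENNReal.tendsto_pow_atTop_nhds_zero_of_lt_one (by norm_num)
      simpa using ENNReal.Tendsto.mul_const h1 (Or.inr (by norm_num))
    exact le_antisymm (ge_of_tendsto' htend hAle) (zero_le)
  have hB : ∀ n : ℕ, μ (⋂ m, ((t (n + m))ᶜ ∩ E)) = 0 := by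
    intro n
    refine h ?_
    have hBle : ∀ m : ℕ, π (⋂ k, ((t (n + k))ᶜ ∩ E)) ≤ 2⁻¹ ^ n * 2⁻¹ ^ m := by
      intro m
      calc π (⋂ k, ((t (n + k))ᶜ ∩ E)) ≤ π ((t (n + m))ᶜ ∩ E) :=
            measure_mono (iInter_subset _ m)
        _ ≤ 2⁻¹ ^ (n + m) := htpi (n + m)
        _ = 2⁻¹ ^ n * 2⁻¹ ^ m := pow_add _ _ _
    have htend : Filter.Tendsto (fun m : ℕ => (2⁻¹ : ℝ≥0∞) ^ n * 2⁻¹ ^ m)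
        Filter.atTop (nhds 0) := by
      have h1 : Filter.Tendsto (fun m : ℕ => (2⁻¹ : ℝ≥0∞) ^ m) Filter.atTop (nhds 0) :=
        ENNReal.tendsto_pow_atTop_nhds_zero_of_lt_one (by norm_num)
      simpa using ENNReal.Tendsto.const_mul h1 (Or.inr (by simp [ENNReal.pow_ne_top]))
    exact le_antisymm (ge_of_tendsto' htend hBle) (zero_le)
  have hcover : E ⊆ A ∪ ⋃ n, ⋂ m, ((t (n + m))ᶜ ∩ E) := by
    intro x hx
    by_cases hxA : x ∈ A
    · exact Or.inl hxA
    · right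
      rw [hAdef] at hxA
      simp only [mem_iInter, not_forall, mem_iUnion] at hxA
      obtain ⟨n, hn⟩ := hxA
      refine mem_iUnion.2 ⟨n, mem_iInter.2 fun m => ?_⟩
      have : x ∉ t (n + m) ∩ E := fun hc => hn ⟨m, hc⟩
      exact ⟨fun hc => this ⟨hc, hx⟩, hx⟩
  refine le_antisymm ?_ (zero_le)
  calc μ E ≤ μ (A ∪ ⋃ n, ⋂ m, ((t (n + m))ᶜ ∩ E)) := measure_mono hcover
    _ ≤ μ A + μ (⋃ n, ⋂ m, ((t (n + m))ᶜ ∩ E)) := measure_union_le _ _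
    _ = 0 := by rw [hA, measure_iUnion_null hB, add_zero]

/-- Transfer of absolute continuity through the équation amicale inversée: if on `(0,∞)`
`Π⁺(B) = ∫_0^∞ Π(B + y) Û⁺(dy)`, Lebesgue measure restricted to the interval `(a,b)`
(with `0 ≤ a < b ≤ ∞`) is absolutely continuous w.r.t. `Π` there, and `Û⁺([0,ε)) > 0`
for every `ε > 0`, then Lebesgue measure restricted to `(a,b)` is absolutely continuous
w.r.t. `Π⁺` there. -/
theorem absolute_continuity_transfer
    (Pi Pip Uh : Measure ℝ)
    (hPi : Pi (Set.Iic 0) = 0) (hPip : Pip (Set.Iic 0) = 0) (hUhsupp : Uh (Set.Iio 0) = 0)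
    (hrel : ∀ B : Set ℝ, MeasurableSet B → B ⊆ Set.Ioi 0 →
      Pip B = ∫⁻ y in Set.Ici (0 : ℝ), Pi ((fun x => x - y) ⁻¹' B) ∂Uh)
    (a : ℝ) (b : EReal) (ha : 0 ≤ a) (hab : (a : EReal) < b)
    (hac : volume.restrict {x : ℝ | a < x ∧ (x : EReal) < b}
      ≪ Pi.restrict {x : ℝ | a < x ∧ (x : EReal) < b})
    (hU0 : ∀ ε : ℝ, 0 < ε → 0 < Uh (Set.Ico 0 ε)) :
    volume.restrict {x : ℝ | a < x ∧ (x : EReal) < b}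
      ≪ Pip.restrict {x : ℝ | a < x ∧ (x : EReal) < b} := by
  set S : Set ℝ := {x : ℝ | a < x ∧ (x : EReal) < b} with hSdef
  have hS : MeasurableSet S := by
    have : S = Ioi a ∩ (Real.toEReal ⁻¹' Iio b) := by
      ext x; simp [hSdef, Ioi, Iio, Real.toEReal]
    rw [this]
    exact measurableSet_Ioi.inter (measurable_coe_real_ereal measurableSet_Iio)
  -- the sigma-finite minorant of Pi
  set ν : Measure ℝ := volume.restrict S ⊓ Pi.restrict S with hνdef
  have hν_le_Pi : ν ≤ Pi := le_trans inf_le_right Measure.restrict_le_self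
  have hνsf : SigmaFinite ν := Measure.sigmaFinite_of_le (volume.restrict S) inf_le_left
  have hμν : volume.restrict S ≪ ν := absolutelyContinuous_inf hac
  refine Measure.AbsolutelyContinuous.mk fun E hE h0 => ?_
  rw [Measure.restrict_apply hE] at h0 ⊢
  by_contra hne
  -- Step 1: find `c` with `(c : EReal) < b` and `volume (E ∩ S ∩ Iic c) > 0`
  have hstep1 : ∃ c : ℝ, (c : EReal) < b ∧ 0 < volume (E ∩ S ∩ Iic c) := by
    by_contra hcon
    push_neg at hcon
    have hz : ∀ c : ℝ, (c : EReal) < b → volume (E ∩ S ∩ Iic c) = 0 := fun c hc =>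
      le_antisymm (hcon c hc) (zero_le)
    have hsub : E ∩ S ⊆ ⋃ q : {q : ℚ // ((q : ℝ) : EReal) < b}, (E ∩ S ∩ Iic (q : ℝ)) := by
      intro x hx
      obtain ⟨z, hxz, hzb⟩ := exists_between hx.2.2
      have hzt : z ≠ ⊤ := fun hzt => absurd (hzt ▸ hzb) (by simp)
      have hzb' : z ≠ ⊥ := fun hzb' => absurd (hzb' ▸ hxz) (by simp)
      obtain ⟨q, hq1, hq2⟩ := exists_rat_btwn (show x < z.toReal by
        rwa [← EReal.coe_lt_coe_iff, EReal.coe_toReal hzt hzb'])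
      have hqb : ((q : ℝ) : EReal) < b := by
        refine lt_trans ?_ hzb
        rw [← EReal.coe_toReal hzt hzb']
        exact_mod_cast hq2
      exact mem_iUnion.2 ⟨⟨q, hqb⟩, hx, le_of_lt hq1⟩
    have : volume (E ∩ S) = 0 :=
      measure_mono_null hsub (measure_iUnion_null fun q => hz (q : ℝ) q.2)
    exact hne this
  obtain ⟨c, hcb, hCpos⟩ := hstep1
  set C : Set ℝ := E ∩ S ∩ Iic c with hCdef
  have hCm : MeasurableSet C := (hE.inter hS).inter measurableSet_Iic
  have hCS : C ⊆ S := fun x hx => hx.1.2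
  have hC0 : C ⊆ Ioi 0 := fun x hx => lt_of_le_of_lt ha hx.1.2.1
  -- Step 2: find `c' > c` with `(c' : EReal) < b`
  obtain ⟨z, hcz, hzb⟩ := exists_between hcb
  have hzt : z ≠ ⊤ := fun hzt => absurd (hzt ▸ hzb) (by simp)
  have hzbot : z ≠ ⊥ := fun h' => absurd (h' ▸ hcz) (by simp)
  set c' : ℝ := z.toReal with hc'def
  have hcc' : c < c' := by
    rw [← EReal.coe_lt_coe_iff, hc'def, EReal.coe_toReal hzt hzbot]; exact hcz
  have hc'b : (c' : EReal) < b := by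
    rw [hc'def, EReal.coe_toReal hzt hzbot]; exact hzb
  set δ : ℝ := c' - c with hδdef
  have hδ : 0 < δ := sub_pos.2 hcc'
  -- Pip C = 0
  have hPipC : Pip C = 0 :=
    le_antisymm (le_trans (measure_mono inter_subset_left) (le_of_eq h0)) (zero_le)
  have hint : ∫⁻ y in Set.Ici (0 : ℝ), Pi ((fun x => x - y) ⁻¹' C) ∂Uh = 0 := by
    rw [← hrel C hCm hC0]; exact hPipC
  -- the measurable minorant integrand
  set g : ℝ → ℝ≥0∞ := fun y => ν ((fun x => x - y) ⁻¹' C) with hgdef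
  have hgmeas : Measurable g := by
    have hsm : MeasurableSet {p : ℝ × ℝ | p.2 - p.1 ∈ C} :=
      (measurable_snd.sub measurable_fst) hCm
    have := measurable_measure_prodMk_left (ν := ν) hsm
    exact this
  have hgle : ∀ y, g y ≤ Pi ((fun x => x - y) ⁻¹' C) := fun y =>
    Measure.le_iff'.mp hν_le_Pi _
  have hint2 : ∫⁻ y in Set.Ico (0 : ℝ) δ, g y ∂Uh = 0 := by
    refine le_antisymm ?_ (zero_le)
    calc ∫⁻ y in Set.Ico (0 : ℝ) δ, g y ∂Uh
        ≤ ∫⁻ y in Set.Ico (0 : ℝ) δ, Pi ((fun x => x - y) ⁻¹' C) ∂Uh :=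
          lintegral_mono fun y => hgle y
      _ ≤ ∫⁻ y in Set.Ici (0 : ℝ), Pi ((fun x => x - y) ⁻¹' C) ∂Uh :=
          lintegral_mono' (Measure.restrict_mono Ico_subset_Ici_self le_rfl) (fun _ => le_rfl)
      _ = 0 := hint
  -- but g is positive on [0, δ)
  have hgpos : ∀ y ∈ Set.Ico (0 : ℝ) δ, g y ≠ 0 := by
    intro y hy
    set T : Set ℝ := (fun x => x - y) ⁻¹' C with hTdef
    have hTS : T ⊆ S := by
      intro x hx
      have hx' : x - y ∈ C := hx
      constructor
      · have : a < x - y := hx'.1.2.1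
        linarith [hy.1]
      · have hxc : x ≤ c + y := by
          have := hx'.2
          simp only [mem_Iic] at this
          linarith
        have hxc' : x < c' := by
          have := hy.2
          rw [hδdef] at this
          linarith
        calc (x : EReal) < (c' : EReal) := EReal.coe_lt_coe_iff.2 hxc'
          _ < b := hc'b
    have hvolT : volume T = volume C := by
      have : T = (fun x => x + (-y)) ⁻¹' C := by
        ext x; simp [hTdef, sub_eq_add_neg]
      rw [this, measure_preimage_add_right]
    have hvolTS : volume.restrict S T ≠ 0 := by
      have hTm : MeasurableSet T := by
        have : T = (fun x => x + (-y)) ⁻¹' C := by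
          ext x; simp [hTdef, sub_eq_add_neg]
        rw [this]
        exact (measurable_add_const (-y)) hCm
      rw [Measure.restrict_apply hTm, inter_eq_self_of_subset_left hTS, hvolT]
      exact (lt_of_lt_of_le hCpos le_rfl).ne'
    intro hg0
    exact hvolTS (hμν hg0)
  -- conclude Uh (Ico 0 δ) = 0, contradiction
  have hae : ∀ᵐ y ∂Uh.restrict (Set.Ico (0 : ℝ) δ), g y = 0 :=
    (lintegral_eq_zero_iff hgmeas).mp hint2
  have hae' : ∀ᵐ y ∂Uh, y ∈ Set.Ico (0 : ℝ) δ → g y = 0 :=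
    (ae_restrict_iff' measurableSet_Ico).mp hae
  have : Uh (Set.Ico (0 : ℝ) δ) = 0 := by
    have hsub : Set.Ico (0 : ℝ) δ ⊆ {y | ¬(y ∈ Set.Ico (0 : ℝ) δ → g y = 0)} := by
      intro y hy
      simp only [mem_setOf_eq, not_forall]
      exact ⟨hy, hgpos y hy⟩
    exact measure_mono_null hsub hae'
  exact absurd this (hU0 δ hδ).ne'
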